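/- Let (v^k)_{k≥0} in [0,1]^n and (u^k)_{k≥0} in [0,1]^m satisfy, for every k: K(v^{k+1}, u^k) ≤ K(v, u^k) for all v ∈ [0,1]^n, and K(v^{k+1}, u^{k+1}) ≤ K(v^{k+1}, u) for all u ∈ [0,1]^m. If (v^k, u^k) converges to a point (v*, u*), then (v*, u*) ∈ [0,1]^n × [0,1]^m and (v*, u*) is a first-order stationary point of K over [0,1]^n × [0,1]^m: for every (v, u) ∈ [0,1]^n × [0,1]^m, ∇K(v*, u*) · ((v, u) − (v*, u*)) ≥ 0. -/

import Mathlib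

open Finset Filter Topology

/-- If `(v^k, u^k)` is generated by exact alternating minimization of `K`
over `[0,1]^n × [0,1]^m` and converges to `(v*, u*)`, then `(v*, u*)` lies in the box and
is a first-order stationary point of `K` over the box:
`∇K(v*,u*) · ((v,u) − (v*,u*)) ≥ 0` for all `(v,u)` in the box (the gradient pairing is
expressed via the Fréchet derivative of `K`). -/
theorem stmt16
    (n m : ℕ) (hn : 1 ≤ n) (hm : 1 ≤ m)
    (ξ : Fin n → Fin m → ℝ) (hξ : ∀ i j, 0 ≤ ξ i j)
    (lam μ : ℝ) (hlam : 0 < lam) (hμ : 0 < μ)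
    (K : (Fin n → ℝ) × (Fin m → ℝ) → ℝ)
    (hK : ∀ p : (Fin n → ℝ) × (Fin m → ℝ),
      K p = (1 / ((n : ℝ) * (m : ℝ))) * ∑ i : Fin n, ∑ j : Fin m, p.1 i * p.2 j * ξ i j
        - lam * ((1 / (n : ℝ)) * ∑ i : Fin n, p.1 i + (1 / (m : ℝ)) * ∑ j : Fin m, p.2 j)
        + μ * ((1 / (n : ℝ)) * ∑ i : Fin n, p.1 i
            - (1 / (m : ℝ)) * ∑ j : Fin m, p.2 j) ^ 2)
    (v : ℕ → Fin n → ℝ) (u : ℕ → Fin m → ℝ)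
    (hv : ∀ k, v k ∈ Set.Icc (0 : Fin n → ℝ) 1)
    (hu : ∀ k, u k ∈ Set.Icc (0 : Fin m → ℝ) 1)
    (hminV : ∀ k, ∀ w ∈ Set.Icc (0 : Fin n → ℝ) 1, K (v (k + 1), u k) ≤ K (w, u k))
    (hminU : ∀ k, ∀ w ∈ Set.Icc (0 : Fin m → ℝ) 1,
      K (v (k + 1), u (k + 1)) ≤ K (v (k + 1), w))
    (vs : Fin n → ℝ) (us : Fin m → ℝ)
    (hconv : Tendsto (fun k => (v k, u k)) atTop (𝓝 (vs, us))) :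
    (vs ∈ Set.Icc (0 : Fin n → ℝ) 1 ∧ us ∈ Set.Icc (0 : Fin m → ℝ) 1) ∧
      ∀ w ∈ Set.Icc (0 : Fin n → ℝ) 1, ∀ z ∈ Set.Icc (0 : Fin m → ℝ) 1,
        0 ≤ fderiv ℝ K (vs, us) ((w, z) - (vs, us)) := by
  have hKeq : K = fun p : (Fin n → ℝ) × (Fin m → ℝ) =>
      (1 / ((n : ℝ) * (m : ℝ))) * ∑ i : Fin n, ∑ j : Fin m, p.1 i * p.2 j * ξ i j
        - lam * ((1 / (n : ℝ)) * ∑ i : Fin n, p.1 i + (1 / (m : ℝ)) * ∑ j : Fin m, p.2 j)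
        + μ * ((1 / (n : ℝ)) * ∑ i : Fin n, p.1 i
            - (1 / (m : ℝ)) * ∑ j : Fin m, p.2 j) ^ 2 := funext hK
  have hdiff : Differentiable ℝ K := by
    rw [hKeq]
    apply Differentiable.add
    · apply Differentiable.sub
      · apply Differentiable.const_mul
        apply Differentiable.fun_sum; intro i _
        apply Differentiable.fun_sum; intro j _
        exact (((differentiable_apply (𝕜 := ℝ) (F' := fun _ : Fin n => ℝ) i).comp differentiable_fst).mul
          ((differentiable_apply (𝕜 := ℝ) (F' := fun _ : Fin m => ℝ) j).comp differentiable_snd)).mul_const _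
      · apply Differentiable.const_mul
        exact ((Differentiable.fun_sum fun i _ =>
            (differentiable_apply (𝕜 := ℝ) (F' := fun _ : Fin n => ℝ) i).comp differentiable_fst).const_mul _).add
          ((Differentiable.fun_sum fun j _ =>
            (differentiable_apply (𝕜 := ℝ) (F' := fun _ : Fin m => ℝ) j).comp differentiable_snd).const_mul _)
    · apply Differentiable.const_mul
      exact (((Differentiable.fun_sum fun i _ =>
          (differentiable_apply (𝕜 := ℝ) (F' := fun _ : Fin n => ℝ) i).comp differentiable_fst).const_mul _).sub
        ((Differentiable.fun_sum fun j _ =>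
          (differentiable_apply (𝕜 := ℝ) (F' := fun _ : Fin m => ℝ) j).comp differentiable_snd).const_mul _)).pow 2
  have hcont : Continuous K := hdiff.continuous
  have hvconv : Tendsto v atTop (𝓝 vs) := (continuous_fst.tendsto _).comp hconv
  have huconv : Tendsto u atTop (𝓝 us) := (continuous_snd.tendsto _).comp hconv
  have hvs : vs ∈ Set.Icc (0 : Fin n → ℝ) 1 :=
    isClosed_Icc.mem_of_tendsto hvconv (Eventually.of_forall hv)
  have hus : us ∈ Set.Icc (0 : Fin m → ℝ) 1 :=
    isClosed_Icc.mem_of_tendsto huconv (Eventually.of_forall hu)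
  have hv1conv : Tendsto (fun k => v (k + 1)) atTop (𝓝 vs) :=
    hvconv.comp (tendsto_add_atTop_nat 1)
  have hu1conv : Tendsto (fun k => u (k + 1)) atTop (𝓝 us) :=
    huconv.comp (tendsto_add_atTop_nat 1)
  -- limit inequalities
  have hA : ∀ w ∈ Set.Icc (0 : Fin n → ℝ) 1, K (vs, us) ≤ K (w, us) := by
    intro w hw
    have h1 : Tendsto (fun k => K (v (k + 1), u k)) atTop (𝓝 (K (vs, us))) :=
      (hcont.tendsto _).comp (hv1conv.prodMk_nhds huconv)
    have h2 : Tendsto (fun k => K (w, u k)) atTop (𝓝 (K (w, us))) :=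
      (hcont.tendsto _).comp (tendsto_const_nhds.prodMk_nhds huconv)
    exact le_of_tendsto_of_tendsto' h1 h2 fun k => hminV k w hw
  have hB : ∀ z ∈ Set.Icc (0 : Fin m → ℝ) 1, K (vs, us) ≤ K (vs, z) := by
    intro z hz
    have h1 : Tendsto (fun k => K (v (k + 1), u (k + 1))) atTop (𝓝 (K (vs, us))) :=
      (hcont.tendsto _).comp (hv1conv.prodMk_nhds hu1conv)
    have h2 : Tendsto (fun k => K (v (k + 1), z)) atTop (𝓝 (K (vs, z))) :=
      (hcont.tendsto _).comp (hv1conv.prodMk_nhds tendsto_const_nhds)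
    exact le_of_tendsto_of_tendsto' h1 h2 fun k => hminU k z hz
  refine ⟨⟨hvs, hus⟩, ?_⟩
  intro w hw z hz
  have hfd : ∀ s, HasFDerivWithinAt K (fderiv ℝ K (vs, us)) s (vs, us) :=
    fun s => (hdiff _).hasFDerivAt.hasFDerivWithinAt
  -- directional nonneg in v-direction
  have key : ∀ (q : (Fin n → ℝ) × (Fin m → ℝ)),
      (∀ p ∈ segment ℝ ((vs, us) : (Fin n → ℝ) × (Fin m → ℝ)) q, K (vs, us) ≤ K p) →
      0 ≤ fderiv ℝ K (vs, us) (q - (vs, us)) := by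
    intro q hq
    have hmin : IsMinOn K (segment ℝ ((vs, us) : (Fin n → ℝ) × (Fin m → ℝ)) q) (vs, us) :=
      fun p hp => hq p hp
    exact hmin.localize.hasFDerivWithinAt_nonneg (hfd _)
      (sub_mem_posTangentConeAt_of_segment_subset subset_rfl)
  have hKv : 0 ≤ fderiv ℝ K (vs, us) ((w, us) - (vs, us)) := by
    apply key
    rintro p ⟨a, b, ha, hb, hab, rfl⟩
    have h2 : (a • ((vs, us) : (Fin n → ℝ) × (Fin m → ℝ)) + b • (w, us)) =
        (a • vs + b • w, us) := by
      ext <;> simp [← add_smul, hab]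
    rw [h2]
    exact hA _ ((convex_Icc _ _) hvs hw ha hb hab)
  have hKu : 0 ≤ fderiv ℝ K (vs, us) ((vs, z) - (vs, us)) := by
    apply key
    rintro p ⟨a, b, ha, hb, hab, rfl⟩
    have h2 : (a • ((vs, us) : (Fin n → ℝ) × (Fin m → ℝ)) + b • (vs, z)) =
        (vs, a • us + b • z) := by
      ext <;> simp [← add_smul, hab]
    rw [h2]
    exact hB _ ((convex_Icc _ _) hus hz ha hb hab)
  have hsplit : ((w, z) - (vs, us) : (Fin n → ℝ) × (Fin m → ℝ)) =
      ((w, us) - (vs, us)) + ((vs, z) - (vs, us)) := by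
    ext <;> simp
  rw [hsplit, map_add]
  exact add_nonneg hKv hKu
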